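/- Let (M, ∘, e) be an F-manifold of dimension n and X₀ a vector field such that the ∘-powers {X₀, X₀², …, X₀ⁿ} form a frame of TM. Assume there exists a torsion-free connection ∇̃ on TM, compatible with ∘, satisfying ∇̃_Y(X₀) ∘ Z = ∇̃_Z(X₀) ∘ Y for all vector fields Y, Z. Then the set of all torsion-free connections compatible with ∘ satisfying this condition is a special family on (M, ∘, e). -/

import Mathlib

/-- An algebraic model of the geometric setting of the paper: `R` plays the role
of the ring `C^∞(M)` of smooth functions on a manifold `M`, and `V` plays the
role of the `C^∞(M)`-module of smooth vector fields on `M`, equipped with its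
Lie bracket and with the action of vector fields on functions by derivations. -/
structure SmoothSetting (R V : Type*) [CommRing R] [LieRing V] [Module R V] where
  /-- the action `X(f)` of a vector field `X` on a function `f` -/
  deriv : V → R → R
  deriv_add : ∀ (X : V) (f g : R), deriv X (f + g) = deriv X f + deriv X g
  deriv_mul : ∀ (X : V) (f g : R), deriv X (f * g) = deriv X f * g + f * deriv X g
  add_deriv : ∀ (X Y : V) (f : R), deriv (X + Y) f = deriv X f + deriv Y f
  smul_deriv : ∀ (f : R) (X : V) (g : R), deriv (f • X) g = f * deriv X g
  bracket_deriv : ∀ (X Y : V) (f : R),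
    deriv ⁅X, Y⁆ f = deriv X (deriv Y f) - deriv Y (deriv X f)
  bracket_smul : ∀ (X : V) (f : R) (Y : V), ⁅X, f • Y⁆ = f • ⁅X, Y⁆ + deriv X f • Y

/-- `(m, e)` is an F-manifold structure: `m` is a fiber-preserving (i.e.
`C^∞(M)`-bilinear) commutative associative multiplication on vector fields with
unit field `e`, satisfying the Hertling–Manin integrability condition
`L_{X∘Y}(∘) = X ∘ L_Y(∘) + Y ∘ L_X(∘)`. -/
structure IsFManifold (R : Type*) {V : Type*} [CommRing R] [LieRing V] [Module R V]
    (m : V → V → V) (e : V) : Prop where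
  add_left : ∀ X Y Z : V, m (X + Y) Z = m X Z + m Y Z
  smul_left : ∀ (f : R) (X Y : V), m (f • X) Y = f • m X Y
  comm : ∀ X Y : V, m X Y = m Y X
  assoc : ∀ X Y Z : V, m (m X Y) Z = m X (m Y Z)
  unit : ∀ X : V, m e X = X
  hertling_manin : ∀ X Y Z W : V,
    ⁅m X Y, m Z W⁆ - m ⁅m X Y, Z⁆ W - m Z ⁅m X Y, W⁆ =
      m X (⁅Y, m Z W⁆ - m ⁅Y, Z⁆ W - m Z ⁅Y, W⁆)
        + m Y (⁅X, m Z W⁆ - m ⁅X, Z⁆ W - m Z ⁅X, W⁆)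

/-- The dual multiplication `X * Y := X ∘ Y ∘ ε⁻¹` determined by an invertible
vector field `ε` with inverse `εinv`. -/
def dualMul {V : Type*} (m : V → V → V) (εinv : V) : V → V → V :=
  fun X Y => m (m X Y) εinv

/-- `ε` (with inverse `εinv`) is an eventual identity on the F-manifold `(m, e)`:
it is invertible and the dual multiplication `X * Y = X ∘ Y ∘ ε⁻¹` defines an
F-manifold structure on `M` with unit field `ε`. -/
def IsEventualIdentity (R : Type*) {V : Type*} [CommRing R] [LieRing V] [Module R V]
    (m : V → V → V) (e ε εinv : V) : Prop :=
  m ε εinv = e ∧ IsFManifold R (dualMul m εinv) ε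

/-- `nabla` is a (Koszul) connection on the tangent bundle, i.e. on vector fields. -/
structure IsConnection {R V : Type*} [CommRing R] [LieRing V] [Module R V]
    (S : SmoothSetting R V) (nabla : V → V → V) : Prop where
  add_left : ∀ X Y Z : V, nabla (X + Y) Z = nabla X Z + nabla Y Z
  smul_left : ∀ (f : R) (X Y : V), nabla (f • X) Y = f • nabla X Y
  add_right : ∀ X Y Z : V, nabla X (Y + Z) = nabla X Y + nabla X Z
  leibniz : ∀ (X : V) (f : R) (Y : V), nabla X (f • Y) = S.deriv X f • Y + f • nabla X Y

/-- `nabla` is torsion-free. -/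
def IsTorsionFree {V : Type*} [LieRing V] (nabla : V → V → V) : Prop :=
  ∀ X Y, nabla X Y - nabla Y X = ⁅X, Y⁆

/-- The covariant derivative `∇_X(∘)(Y, Z)` of a multiplication `m` with respect
to a connection `nabla`. -/
def covMul {V : Type*} [LieRing V] (nabla m : V → V → V) (X Y Z : V) : V :=
  nabla X (m Y Z) - m (nabla X Y) Z - m Y (nabla X Z)

/-- `nabla` is compatible with the multiplication `m`: the vector valued tensor
`∇(∘)` is totally symmetric. -/
def IsCompatible {V : Type*} [LieRing V] (nabla m : V → V → V) : Prop :=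
  ∀ X Y Z, covMul nabla m X Y Z = covMul nabla m Y X Z ∧
    covMul nabla m X Y Z = covMul nabla m X Z Y

/-- The curvature `R^∇_{X,Y}Z = ∇_X∇_Y Z − ∇_Y∇_X Z − ∇_{[X,Y]}Z`. -/
def curv {V : Type*} [LieRing V] (nabla : V → V → V) (X Y Z : V) : V :=
  nabla X (nabla Y Z) - nabla Y (nabla X Z) - nabla ⁅X, Y⁆ Z

/-- `nabla` is flat. -/
def IsFlat {V : Type*} [LieRing V] (nabla : V → V → V) : Prop :=
  ∀ X Y Z, curv nabla X Y Z = 0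

/-- The curvature condition
`V∘R_{Z,Y}X + Y∘R_{V,Z}X + Z∘R_{Y,V}X = 0` of Lorenzoni–Pedroni. -/
def CurvCircCond {V : Type*} [LieRing V] (m nabla : V → V → V) : Prop :=
  ∀ X Y Z W, m W (curv nabla Z Y X) + m Y (curv nabla W Z X)
    + m Z (curv nabla Y W X) = 0

/-- A special family of connections on the F-manifold `(m, e)`: the family of
all `∇̃^V_X(Y) = ∇̃_X(Y) + V∘X∘Y`, `V` a vector field, where `∇̃` is some
torsion-free connection compatible with `m`. -/
def IsSpecialFamily {R V : Type*} [CommRing R] [LieRing V] [Module R V]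
    (S : SmoothSetting R V) (m : V → V → V) (SF : Set (V → V → V)) : Prop :=
  ∃ nt : V → V → V, IsConnection S nt ∧ IsTorsionFree nt ∧ IsCompatible nt m ∧
    SF = { n | ∃ W : V, n = fun X Y => nt X Y + m (m W X) Y }

/-- The connection `∇^W_X(Y) = ε∘∇̃_X(ε⁻¹∘Y) − ∇̃_{ε⁻¹∘Y}(ε)∘X + W*X*Y` on the
dual F-manifold, where `*` is the dual multiplication. -/
def dualConn {V : Type*} [LieRing V] (m : V → V → V) (ε εinv : V)
    (nt : V → V → V) (W : V) : V → V → V :=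
  fun X Y => m ε (nt X (m εinv Y)) - m (nt (m εinv Y) ε) X
    + dualMul m εinv (dualMul m εinv W X) Y

/-- The dual family `D_ε(S̃)` built from a chosen connection `nt ∈ S̃`. -/
def dualFamily {V : Type*} [LieRing V] (m : V → V → V) (ε εinv : V)
    (nt : V → V → V) : Set (V → V → V) :=
  { n | ∃ W : V, n = dualConn m ε εinv nt W }

/-- The dual family `D_ε(S̃)` of a family of connections `S̃`. -/
def dualFamilyOfSet {V : Type*} [LieRing V] (m : V → V → V) (ε εinv : V)
    (SF : Set (V → V → V)) : Set (V → V → V) :=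
  { n | ∃ nt ∈ SF, ∃ W : V, n = dualConn m ε εinv nt W }

/-- The second structure connection
`∇^F_X(Y) = ε∘∇̃_X(ε⁻¹∘Y) − ∇̃_{ε⁻¹∘Y}(ε)∘X` of `(M, ∘, e, ε, ∇̃)`. -/
def secondConn {V : Type*} [LieRing V] (m : V → V → V) (ε εinv : V)
    (nt : V → V → V) : V → V → V :=
  fun X Y => m ε (nt X (m εinv Y)) - m (nt (m εinv Y) ε) X

/-- The connection
`∇_X(Y) = ε∘∇̃_X(ε⁻¹∘Y) − ∇̃_{ε⁻¹∘Y}(ε)∘X + (1/2)[ε⁻¹,ε]∘X∘Y + U*X*Y`. -/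
def uDualConn {V : Type*} [LieRing V] [Module ℚ V] (m : V → V → V)
    (ε εinv U : V) (nt : V → V → V) : V → V → V :=
  fun X Y => secondConn m ε εinv nt X Y + (2 : ℚ)⁻¹ • m (m ⁅εinv, ε⁆ X) Y
    + dualMul m εinv (dualMul m εinv U X) Y

/-- The `k`-th power `X^k` of a vector field with respect to the multiplication
`m` with unit `e`. -/
def mpow {V : Type*} (m : V → V → V) (e X : V) : ℕ → V
  | 0 => e
  | k + 1 => m X (mpow m e X k)

/-- The Legendre transformation `L_u(S̃) = { u⁻¹∘∇̃_X(u∘Y) : ∇̃ ∈ S̃ }` of a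
family of connections `S̃` by an invertible vector field `u` (with inverse
`uinv`). -/
def legFamily {V : Type*} (m : V → V → V) (uinv u : V)
    (SF : Set (V → V → V)) : Set (V → V → V) :=
  { n | ∃ nt ∈ SF, n = fun X Y => m uinv (nt X (m u Y)) }

/-- **Example 5.6 i.** Let `(M, ∘, e)` be an F-manifold of
dimension `n` and `X₀` a vector field whose `∘`-powers `X₀, X₀², …, X₀ⁿ` form a
frame of `TM`. If there exists a torsion-free connection `∇̃`, compatible with
`∘`, with `∇̃_Y(X₀)∘Z = ∇̃_Z(X₀)∘Y` for all `Y, Z`, then the set of all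
torsion-free compatible connections satisfying this condition is a special
family on `(M, ∘, e)`. -/
theorem statement8 {R V : Type*} [CommRing R] [LieRing V] [Module R V]
    (S : SmoothSetting R V) (m : V → V → V) (e : V)
    (hF : IsFManifold R m e) (n : ℕ) (X0 : V)
    (hframe : ∃ b : Module.Basis (Fin n) R V, ∀ i : Fin n, b i = mpow m e X0 ((i : ℕ) + 1))
    (hex : ∃ nt : V → V → V, IsConnection S nt ∧ IsTorsionFree nt ∧
      IsCompatible nt m ∧ ∀ Y Z : V, m (nt Y X0) Z = m (nt Z X0) Y) :
    IsSpecialFamily S m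
      { nt : V → V → V | IsConnection S nt ∧ IsTorsionFree nt ∧
        IsCompatible nt m ∧ ∀ Y Z : V, m (nt Y X0) Z = m (nt Z X0) Y } := by
  obtain ⟨b, hb⟩ := hframe
  obtain ⟨nt, hc, htf, hcomp, hX0⟩ := hex
  -- basic multiplication lemmas
  have hYe : ∀ Y : V, m Y e = Y := fun Y => by rw [hF.comm]; exact hF.unit Y
  have hadd2 : ∀ A Y Z : V, m A (Y + Z) = m A Y + m A Z := fun A Y Z => by
    rw [hF.comm, hF.add_left, hF.comm A Y, hF.comm A Z]
  have hsmul2 : ∀ (f : R) (A Y : V), m A (f • Y) = f • m A Y := fun f A Y => by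
    rw [hF.comm, hF.smul_left, hF.comm]
  have hzero1 : ∀ Z : V, m 0 Z = 0 := by
    intro Z
    have h := hF.add_left 0 0 Z
    rw [add_zero] at h
    exact (left_eq_add.mp h)
  have hzero2 : ∀ Z : V, m Z 0 = 0 := fun Z => by rw [hF.comm]; exact hzero1 Z
  -- a commutative ring structure on V from the multiplication m
  letI : CommRing V :=
    { (inferInstance : AddCommGroup V) with
      mul := m, one := e,
      left_distrib := hadd2,
      right_distrib := hF.add_left,
      zero_mul := hzero1,
      mul_zero := hzero2,
      mul_assoc := hF.assoc,
      one_mul := hF.unit,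
      mul_one := hYe,
      mul_comm := hF.comm }
  have hm : ∀ X Y : V, m X Y = X * Y := fun _ _ => rfl
  refine ⟨nt, hc, htf, hcomp, ?_⟩
  ext n'
  simp only [Set.mem_setOf_eq]
  constructor
  · rintro ⟨hc', htf', hcomp', hX0'⟩
    -- the difference tensor
    set D : V → V → V := fun X Y => n' X Y - nt X Y with hD
    have hDsym : ∀ X Y, D X Y = D Y X := by
      intro X Y
      have h1 := htf X Y
      have h2 := htf' X Y
      simp only [hD, IsTorsionFree] at *
      linear_combination h2 - h1
    have hDadd : ∀ X Y Z, D X (Y + Z) = D X Y + D X Z := by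
      intro X Y Z
      simp only [hD, hc.add_right, hc'.add_right]
      abel
    have hDsmul : ∀ (X : V) (f : R) (Y : V), D X (f • Y) = f • D X Y := by
      intro X f Y
      simp only [hD, hc.leibniz, hc'.leibniz, smul_sub]
      abel
    -- symmetry of the difference of covariant derivatives of ∘
    have hPhiSym : ∀ X Y Z,
        D X (m Y Z) - m (D X Y) Z - m Y (D X Z)
          = D Y (m X Z) - m (D Y X) Z - m X (D Y Z) := by
      intro X Y Z
      have h1 := (hcomp X Y Z).1
      have h2 := (hcomp' X Y Z).1
      simp only [covMul, hm] at h1 h2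
      simp only [hD, hm]
      linear_combination h2 - h1
    have hX0diff : ∀ Y Z, m (D Y X0) Z = m (D Z X0) Y := by
      intro Y Z
      have h1 := hX0 Y Z
      have h2 := hX0' Y Z
      simp only [hm] at h1 h2
      simp only [hD, hm]
      linear_combination h2 - h1
    set W : V := D e e with hW
    have hDe : ∀ X, D X e = m W X := by
      intro X
      have h := hPhiSym X e e
      simp only [hYe, hF.unit] at h
      simp only [hm] at h ⊢
      linear_combination -h
    have hC : ∀ Y, D Y X0 = m (m W X0) Y := by
      intro Y
      have h := hX0diff Y e
      rw [hYe] at h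
      rw [h, hDsym e X0, hDe X0]
    have hCsym : ∀ Y, D X0 Y = m (m W X0) Y := fun Y => (hDsym X0 Y).trans (hC Y)
    -- values on powers of X0
    have hP : ∀ j : ℕ, ∀ Y, D Y (mpow m e X0 (j + 1))
        = m (m W (mpow m e X0 (j + 1))) Y := by
      intro j
      induction j with
      | zero =>
        intro Y
        simp only [mpow, hYe]
        exact hC Y
      | succ j ih =>
        intro Y
        have hstep : mpow m e X0 (j + 2) = m X0 (mpow m e X0 (j + 1)) := rfl
        set P : V := mpow m e X0 (j + 1) with hPdef
        rw [hstep]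
        have h := hPhiSym Y X0 P
        rw [hC Y, ih Y, hCsym (m Y P), hCsym Y, hCsym P] at h
        simp only [hm] at h ⊢
        linear_combination h
    -- D X Y = W ∘ X ∘ Y for all X, Y by linearity
    have key : ∀ X Y, D X Y = m (m W X) Y := by
      intro X Y
      let L1 : V →ₗ[R] V :=
        { toFun := fun Y => D X Y
          map_add' := hDadd X
          map_smul' := fun f Y => hDsmul X f Y }
      let L2 : V →ₗ[R] V :=
        { toFun := fun Y => m (m W X) Y
          map_add' := hadd2 (m W X)
          map_smul' := fun f Y => hsmul2 f (m W X) Y }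
      have hL : L1 = L2 := by
        refine b.ext fun i => ?_
        show D X (b i) = m (m W X) (b i)
        rw [hb i, hP (↑i) X]
        simp only [hm]
        ring
      exact LinearMap.congr_fun hL Y
    refine ⟨W, ?_⟩
    funext X Y
    have := key X Y
    simp only [hD] at this
    linear_combination this
  · rintro ⟨W, rfl⟩
    refine ⟨?_, ?_, ?_, ?_⟩
    · constructor
      · intro X Y Z
        rw [hc.add_left, hadd2 W X Y, hF.add_left]
        abel
      · intro f X Y
        rw [hc.smul_left, hsmul2 f W X, hF.smul_left, smul_add]
      · intro X Y Z
        rw [hc.add_right, hadd2]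
        abel
      · intro X f Y
        rw [hc.leibniz, hsmul2, smul_add]
        abel
    · intro X Y
      have h := htf X Y
      simp only [hm] at h ⊢
      linear_combination h
    · intro X Y Z
      have h1 := (hcomp X Y Z).1
      have h2 := (hcomp X Y Z).2
      simp only [covMul, hm] at h1 h2 ⊢
      constructor
      · linear_combination h1
      · linear_combination h2
    · intro Y Z
      have h := hX0 Y Z
      simp only [hm] at h ⊢
      linear_combination h
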